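/- Let K be a field and let L and F be finite Galois extensions of K inside a common field, with Gal(L/K) isomorphic to the symmetric group S_n for some n ≥ 5, and suppose L is not contained in F. Then the intersection L ∩ F has degree at most 2 over K. -/

import Mathlib

open Equiv Equiv.Perm IntermediateField

private lemma aux_exists_not_mem {α : Type*} [Fintype α] [DecidableEq α] (s : Finset α)
    (h : s.card < Fintype.card α) : ∃ x, x ∉ s := by
  by_contra h'
  push_neg at h'
  have hs : s = Finset.univ := Finset.eq_univ_iff_forall.mpr h'
  rw [hs, Finset.card_univ] at h
  exact lt_irrefl _ h

/-- A nontrivial normal subgroup of a permutation group on at least 5 elements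
contains a 3-cycle. -/
private lemma aux_exists_three_cycle {α : Type*} [Fintype α] [DecidableEq α]
    (h5 : 5 ≤ Fintype.card α) (N : Subgroup (Equiv.Perm α)) (hnormal : N.Normal)
    (hN : N ≠ ⊥) : ∃ f ∈ N, Equiv.Perm.IsThreeCycle f := by
  obtain ⟨σ, hσN, hσ1⟩ : ∃ σ ∈ N, σ ≠ (1 : Equiv.Perm α) :=
    (Subgroup.nontrivial_iff_exists_ne_one N).mp
      (N.bot_or_nontrivial.resolve_left hN)
  obtain ⟨a, ha⟩ : ∃ a, σ a ≠ a := by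
    by_contra h
    push_neg at h
    exact hσ1 (Equiv.ext h)
  set b := σ a with hb
  have hab : a ≠ b := fun h => ha h.symm
  obtain ⟨c, hc⟩ : ∃ c, c ∉ ({a, b} : Finset α) := by
    apply aux_exists_not_mem
    have h1 := Finset.card_insert_le a ({b} : Finset α)
    have h2 : ({b} : Finset α).card = 1 := Finset.card_singleton b
    omega
  simp only [Finset.mem_insert, Finset.mem_singleton, not_or] at hc
  obtain ⟨hca, hcb⟩ := hc
  set d := σ c with hd
  have hbd : b ≠ d := fun h => hca (σ.injective h).symm
  set τ : Equiv.Perm α := Equiv.swap a c with hτ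
  -- the commutator
  have hπN : Equiv.swap b d * τ ∈ N := by
    have h1 : τ * σ⁻¹ * τ⁻¹ ∈ N := hnormal.conj_mem _ (inv_mem hσN) τ
    have h2 : σ * (τ * σ⁻¹ * τ⁻¹) ∈ N := mul_mem hσN h1
    have h3 : σ * (τ * σ⁻¹ * τ⁻¹) = Equiv.swap b d * τ := by
      have h4 : Equiv.swap b d = σ * τ * σ⁻¹ := Equiv.swap_apply_apply σ a c
      rw [h4, hτ, Equiv.swap_inv]
      group
    rw [← h3]
    exact h2
  by_cases hdc : d = c
  · refine ⟨Equiv.swap b d * τ, hπN, ?_⟩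
    rw [hdc, hτ, Equiv.swap_comm b c, Equiv.swap_comm a c]
    exact isThreeCycle_swap_mul_swap_same hcb hca ha
  by_cases hda : d = a
  · refine ⟨Equiv.swap b d * τ, hπN, ?_⟩
    rw [hda, hτ, Equiv.swap_comm b a]
    exact isThreeCycle_swap_mul_swap_same hab (fun h => hca h.symm) (fun h => hcb h.symm)
  -- now a, b, c, d are pairwise distinct
  obtain ⟨x, hx⟩ : ∃ x, x ∉ ({a, b, c, d} : Finset α) := by
    apply aux_exists_not_mem
    have h1 := Finset.card_insert_le a ({b, c, d} : Finset α)
    have h2 := Finset.card_insert_le b ({c, d} : Finset α)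
    have h3 := Finset.card_insert_le c ({d} : Finset α)
    have h4 : ({d} : Finset α).card = 1 := Finset.card_singleton d
    omega
  simp only [Finset.mem_insert, Finset.mem_singleton, not_or] at hx
  obtain ⟨hxa, hxb, hxc, hxd⟩ := hx
  set ρ : Equiv.Perm α := Equiv.swap a x with hρ
  have hπ'N : ρ * (Equiv.swap b d * τ) * ρ⁻¹ ∈ N := hnormal.conj_mem _ hπN ρ
  have hπ'eq : ρ * (Equiv.swap b d * τ) * ρ⁻¹ = Equiv.swap b d * Equiv.swap x c := by
    have e1 : ρ * Equiv.swap b d * ρ⁻¹ = Equiv.swap (ρ b) (ρ d) :=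
      (Equiv.swap_apply_apply ρ b d).symm
    have e2 : ρ * τ * ρ⁻¹ = Equiv.swap (ρ a) (ρ c) := (Equiv.swap_apply_apply ρ a c).symm
    have e3 : ρ b = b := Equiv.swap_apply_of_ne_of_ne (fun h => hab h.symm) (fun h => hxb h.symm)
    have e4 : ρ d = d := Equiv.swap_apply_of_ne_of_ne (fun h => hda h) (fun h => hxd h.symm)
    have e5 : ρ a = x := Equiv.swap_apply_left a x
    have e6 : ρ c = c := Equiv.swap_apply_of_ne_of_ne hca (fun h => hxc h.symm)
    calc ρ * (Equiv.swap b d * τ) * ρ⁻¹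
        = (ρ * Equiv.swap b d * ρ⁻¹) * (ρ * τ * ρ⁻¹) := by group
      _ = Equiv.swap (ρ b) (ρ d) * Equiv.swap (ρ a) (ρ c) := by rw [e1, e2]
      _ = Equiv.swap b d * Equiv.swap x c := by rw [e3, e4, e5, e6]
  refine ⟨(Equiv.swap b d * τ)⁻¹ * (ρ * (Equiv.swap b d * τ) * ρ⁻¹),
    mul_mem (inv_mem hπN) hπ'N, ?_⟩
  have key : (Equiv.swap b d * τ)⁻¹ * (ρ * (Equiv.swap b d * τ) * ρ⁻¹)
      = Equiv.swap c a * Equiv.swap c x := by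
    rw [hπ'eq, hτ, mul_inv_rev, Equiv.swap_inv, Equiv.swap_inv, mul_assoc,
      ← mul_assoc (Equiv.swap b d), Equiv.swap_mul_self, one_mul,
      Equiv.swap_comm a c, Equiv.swap_comm x c]
  rw [key]
  exact isThreeCycle_swap_mul_swap_same hca (fun h => hxc h.symm) (fun h => hxa h.symm)

/-- A nontrivial normal subgroup of a permutation group on at least 5 elements
has index at most two. -/
private lemma aux_index_le_two {α : Type*} [Fintype α] [DecidableEq α]
    (h5 : 5 ≤ Fintype.card α) (N : Subgroup (Equiv.Perm α)) (hnormal : N.Normal)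
    (hN : N ≠ ⊥) : N.index ≤ 2 := by
  obtain ⟨f, hfN, hf3⟩ := aux_exists_three_cycle h5 N hnormal hN
  have halt : alternatingGroup α ≤ N := by
    rw [← Equiv.Perm.closure_three_cycles_eq_alternating]
    rw [Subgroup.closure_le]
    intro g hg
    have hg3 : Equiv.Perm.IsThreeCycle g := hg
    have hconj : IsConj f g :=
      (Equiv.Perm.isConj_iff_cycleType_eq).mpr (hf3.cycleType.trans hg3.cycleType.symm)
    obtain ⟨t, ht⟩ := isConj_iff.mp hconj
    rw [← ht]
    exact hnormal.conj_mem f hfN t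
  have hdvd : N.index ∣ (alternatingGroup α).index := Subgroup.index_dvd_of_le halt
  have hnt : Nontrivial α := by
    rw [← Fintype.one_lt_card_iff_nontrivial]
    omega
  have hidx : (alternatingGroup α).index = 2 := by
    have h1 : (alternatingGroup α).index * Nat.card (alternatingGroup α)
        = Nat.card (Equiv.Perm α) := Subgroup.index_mul_card _
    have h2 : 2 * Fintype.card (alternatingGroup α) = Fintype.card (Equiv.Perm α) :=
      two_mul_card_alternatingGroup
    rw [Nat.card_eq_fintype_card, Nat.card_eq_fintype_card, ← h2] at h1
    have hpos : 0 < Fintype.card (alternatingGroup α) := Fintype.card_pos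
    exact Nat.eq_of_mul_eq_mul_right hpos h1
  rw [hidx] at hdvd
  exact Nat.le_of_dvd (by norm_num) hdvd

set_option maxHeartbeats 1000000 in
set_option synthInstance.maxHeartbeats 400000 in
/-- Let `K` be a field and `L`, `F` finite Galois extensions of `K` inside a common
field `Ω`, with `Gal(L/K)` isomorphic to the symmetric group `S_n` for some `n ≥ 5`,
and suppose `L` is not contained in `F`. Then `L ∩ F` has degree at most `2` over `K`. -/
theorem statement8 {K Ω : Type*} [Field K] [Field Ω] [Algebra K Ω]
    (L F : IntermediateField K Ω)
    [FiniteDimensional K ↥L] [IsGalois K ↥L]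
    [FiniteDimensional K ↥F] [IsGalois K ↥F]
    (n : ℕ) (hn : 5 ≤ n)
    (e : (↥L ≃ₐ[K] ↥L) ≃* Equiv.Perm (Fin n))
    (hLF : ¬ L ≤ F) :
    Module.finrank K ↥(L ⊓ F) ≤ 2 := by
  classical
  have hle : L ⊓ F ≤ L := inf_le_left
  -- `L ⊓ F` is Galois over `K`
  haveI hsep : Algebra.IsSeparable K ↥(L ⊓ F) :=
    Algebra.IsSeparable.of_algHom _ _ (IntermediateField.inclusion hle)
  haveI hgal : IsGalois K ↥(L ⊓ F) := ⟨⟩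
  -- view `L ⊓ F` as an intermediate field of `L / K`
  set M : IntermediateField K ↥L := IntermediateField.restrict hle with hM
  have eM : ↥(L ⊓ F) ≃ₐ[K] ↥M := IntermediateField.restrict_algEquiv hle
  haveI : IsGalois K ↥M := IsGalois.of_algEquiv eM
  -- the fixing subgroup
  set N : Subgroup (↥L ≃ₐ[K] ↥L) := M.fixingSubgroup with hN
  haveI hNnormal : N.Normal := IsGalois.fixingSubgroup_normal_of_isGalois M
  have hfixed : IntermediateField.fixedField N = M := IsGalois.fixedField_fixingSubgroup M
  -- N is nontrivial
  have hNbot : N ≠ ⊥ := by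
    intro hbot
    apply hLF
    have hMtop : M = ⊤ := by
      rw [← hfixed, eq_top_iff]
      rintro x -
      rintro ⟨σ, hσ⟩
      rw [hbot, Subgroup.mem_bot] at hσ
      subst hσ
      exact one_smul _ x
    intro x hx
    have hmem : (⟨x, hx⟩ : ↥L) ∈ M := by rw [hMtop]; trivial
    exact ((IntermediateField.mem_restrict hle ⟨x, hx⟩).mp hmem).2
  -- index of N equals finrank of M over K
  have hcard : Fintype.card N = Module.finrank ↥M ↥L :=
    by rw [← Nat.card_eq_fintype_card]; exact IsGalois.card_fixingSubgroup_eq_finrank M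
  have hmul : Module.finrank K ↥M * Module.finrank ↥M ↥L = Module.finrank K ↥L :=
    Module.finrank_mul_finrank K ↥M ↥L
  have haut : Fintype.card (↥L ≃ₐ[K] ↥L) = Module.finrank K ↥L :=
    by rw [← Nat.card_eq_fintype_card]; exact IsGalois.card_aut_eq_finrank K ↥L
  have hidx : N.index * Nat.card N = Nat.card (↥L ≃ₐ[K] ↥L) := Subgroup.index_mul_card N
  rw [Nat.card_eq_fintype_card, Nat.card_eq_fintype_card, hcard, haut, ← hmul] at hidx
  have hpos : 0 < Module.finrank ↥M ↥L := Module.finrank_pos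
  have hindexeq : N.index = Module.finrank K ↥M := Nat.eq_of_mul_eq_mul_right hpos hidx
  -- transport to `Perm (Fin n)`
  set N' : Subgroup (Equiv.Perm (Fin n)) := N.map e.toMonoidHom with hN'
  have hN'normal : N'.Normal := hNnormal.map e.toMonoidHom e.surjective
  have hN'bot : N' ≠ ⊥ := by
    intro hbot
    apply hNbot
    have := Subgroup.map_injective (f := e.toMonoidHom) e.injective
    apply this
    rw [← hN', hbot]
    ext x
    simp [Subgroup.mem_map]
  have hNcomap : N = N'.comap e.toMonoidHom := by
    rw [hN', Subgroup.comap_map_eq_self_of_injective e.injective]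
  have hindexes : N'.index = N.index := by
    rw [hNcomap]
    exact (Subgroup.index_comap_of_surjective N' e.surjective).symm
  have hfin : 5 ≤ Fintype.card (Fin n) := by simpa using hn
  have hle2 : N'.index ≤ 2 := aux_index_le_two hfin N' hN'normal hN'bot
  have hrank : Module.finrank K ↥(L ⊓ F) = Module.finrank K ↥M :=
    eM.toLinearEquiv.finrank_eq
  rw [hrank, ← hindexeq, ← hindexes]
  exact hle2
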